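/- Under the Doeblin condition with constant a ∈ (0,1), for any bounded f and the Markov chain (X_k) with kernel P, the ergodic average satisfies E[((1/n)Σ_{k=0}^{n−1} f(X_k) − μf)²] ≤ (4|f|_*²/(a²n))·(2 + 8/n). -/

import Mathlib

open MeasureTheory ProbabilityTheory Filter
open scoped ENNReal

/-- Total variation distance between two measures. -/
noncomputable def tvDist {X : Type*} [MeasurableSpace X] (μ ν : Measure X) : ℝ :=
  ⨆ s : {s : Set X // MeasurableSet s}, |(μ s.1).toReal - (ν s.1).toReal|

/-- One step of a Markov kernel acting on a measure. -/
noncomputable def stepK {X : Type*} [MeasurableSpace X] (κ : Kernel X X) (ν : Measure X) :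
    Measure X :=
  ν.bind (fun x => κ x)

/-- `|f|_* = inf_λ sup_x |f x - λ|`. -/
noncomputable def fstar {X : Type*} (f : X → ℝ) : ℝ := ⨅ l : ℝ, ⨆ x, |f x - l|

open scoped NNReal

section Aux

variable {X : Type*} [MeasurableSpace X]

lemma integrable_of_bdd {μ : Measure X} [IsFiniteMeasure μ] {g : X → ℝ} {c : ℝ}
    (hg : Measurable g) (h : ∀ x, |g x| ≤ c) : Integrable g μ :=
  (integrable_const c).mono' hg.aestronglyMeasurable (ae_of_all _ fun x => by
    simpa [Real.norm_eq_abs] using h x)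

lemma tvDist_bddAbove (μ ν : Measure X) [IsProbabilityMeasure μ] [IsProbabilityMeasure ν] :
    BddAbove (Set.range fun s : {s : Set X // MeasurableSet s} =>
      |(μ s.1).toReal - (ν s.1).toReal|) := by
  refine ⟨1, ?_⟩
  rintro x ⟨s, rfl⟩
  have h1 : (μ s.1).toReal ≤ 1 := by
    simpa using ENNReal.toReal_mono (by simp) (measure_mono (Set.subset_univ s.1) : μ s.1 ≤ μ Set.univ)
  have h2 : (ν s.1).toReal ≤ 1 := by
    simpa using ENNReal.toReal_mono (by simp) (measure_mono (Set.subset_univ s.1) : ν s.1 ≤ ν Set.univ)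
  have h3 : 0 ≤ (μ s.1).toReal := ENNReal.toReal_nonneg
  have h4 : 0 ≤ (ν s.1).toReal := ENNReal.toReal_nonneg
  rw [abs_sub_le_iff]; constructor <;> linarith

lemma le_tvDist (μ ν : Measure X) [IsProbabilityMeasure μ] [IsProbabilityMeasure ν]
    {s : Set X} (hs : MeasurableSet s) :
    |(μ s).toReal - (ν s).toReal| ≤ tvDist μ ν :=
  le_ciSup (tvDist_bddAbove μ ν) (⟨s, hs⟩ : {s : Set X // MeasurableSet s})

lemma tvDist_nonneg (μ ν : Measure X) [IsProbabilityMeasure μ] [IsProbabilityMeasure ν] :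
    0 ≤ tvDist μ ν := by
  have := le_tvDist μ ν MeasurableSet.empty
  simpa using this.trans' (abs_nonneg _)

lemma tvDist_comm (μ ν : Measure X) : tvDist μ ν = tvDist ν μ := by
  unfold tvDist
  exact iSup_congr fun s => abs_sub_comm _ _

/-- One-sided TV integral bound. -/
lemma integral_sub_le_osc_mul_tv (μ ν : Measure X) [IsProbabilityMeasure μ]
    [IsProbabilityMeasure ν] {g : X → ℝ} (hg : Measurable g) {b c : ℝ} (hc : 0 ≤ c)
    (hb : ∀ x, |g x| ≤ b) (hosc : ∀ x y, g x - g y ≤ c) :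
    ∫ x, g x ∂μ - ∫ x, g x ∂ν ≤ c * tvDist μ ν := by
  obtain ⟨s, hs, h1, h2⟩ := hahn_decomposition (μ := μ) (ν := ν)
  obtain ⟨ρ₁, hρ₁⟩ : ∃ ρ, ρ = μ.restrict s - ν.restrict s := ⟨_, rfl⟩
  obtain ⟨ρ₂, hρ₂⟩ : ∃ ρ, ρ = ν.restrict sᶜ - μ.restrict sᶜ := ⟨_, rfl⟩
  have hle1 : ν.restrict s ≤ μ.restrict s := by
    rw [Measure.le_iff]
    intro t ht
    rw [Measure.restrict_apply ht, Measure.restrict_apply ht]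
    exact h1 _ (ht.inter hs) Set.inter_subset_right
  have hle2 : μ.restrict sᶜ ≤ ν.restrict sᶜ := by
    rw [Measure.le_iff]
    intro t ht
    rw [Measure.restrict_apply ht, Measure.restrict_apply ht]
    exact h2 _ (ht.inter hs.compl) Set.inter_subset_right
  have e1 : ρ₁ + ν.restrict s = μ.restrict s := by
    rw [hρ₁]; exact Measure.sub_add_cancel_of_le hle1
  have e2 : ρ₂ + μ.restrict sᶜ = ν.restrict sᶜ := by
    rw [hρ₂]; exact Measure.sub_add_cancel_of_le hle2
  haveI : IsFiniteMeasure ρ₁ := by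
    rw [hρ₁]; exact isFiniteMeasure_of_le _ (Measure.sub_le)
  haveI : IsFiniteMeasure ρ₂ := by
    rw [hρ₂]; exact isFiniteMeasure_of_le _ (Measure.sub_le)
  clear hρ₁ hρ₂
  -- real masses
  obtain ⟨r1, hr1⟩ : ∃ r, r = (ρ₁ Set.univ).toReal := ⟨_, rfl⟩
  obtain ⟨r2, hr2⟩ : ∃ r, r = (ρ₂ Set.univ).toReal := ⟨_, rfl⟩
  have hconst : ∀ (ρ : Measure X) [IsFiniteMeasure ρ] (t : ℝ),
      ∫ _, t ∂ρ = (ρ Set.univ).toReal * t := by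
    intro ρ _ t; rw [integral_const, smul_eq_mul]; rfl
  have hm1 : r1 + (ν s).toReal = (μ s).toReal := by
    have := congrArg (fun m : Measure X => (m Set.univ).toReal) e1
    simp only [Measure.coe_add, Pi.add_apply, Measure.restrict_apply_univ,
      ENNReal.toReal_add (measure_ne_top _ _) (measure_ne_top _ _)] at this
    rw [hr1]; exact this
  have hm2 : r2 + (μ sᶜ).toReal = (ν sᶜ).toReal := by
    have := congrArg (fun m : Measure X => (m Set.univ).toReal) e2
    simp only [Measure.coe_add, Pi.add_apply, Measure.restrict_apply_univ,
      ENNReal.toReal_add (measure_ne_top _ _) (measure_ne_top _ _)] at this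
    rw [hr2]; exact this
  have hμc : (μ s).toReal + (μ sᶜ).toReal = 1 := by
    have := measure_add_measure_compl (μ := μ) hs
    rw [measure_univ] at this
    have := congrArg ENNReal.toReal this
    simpa [ENNReal.toReal_add (measure_ne_top _ _) (measure_ne_top _ _)] using this
  have hνc : (ν s).toReal + (ν sᶜ).toReal = 1 := by
    have := measure_add_measure_compl (μ := ν) hs
    rw [measure_univ] at this
    have := congrArg ENNReal.toReal this
    simpa [ENNReal.toReal_add (measure_ne_top _ _) (measure_ne_top _ _)] using this
  have hr12 : r2 = r1 := by linarith
  -- integrability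
  have hint : ∀ (ρ : Measure X) [IsFiniteMeasure ρ], Integrable g ρ := fun ρ _ =>
    integrable_of_bdd hg hb
  -- split integrals
  have hsplitμ : ∫ x, g x ∂μ = ∫ x, g x ∂ρ₁ + ∫ x, g x ∂(ν.restrict s)
      + ∫ x, g x ∂(μ.restrict sᶜ) := by
    conv_lhs => rw [← Measure.restrict_add_restrict_compl (μ := μ) hs]
    rw [integral_add_measure (hint _) (hint _), ← e1,
      integral_add_measure (hint _) (hint _)]
  have hsplitν : ∫ x, g x ∂ν = ∫ x, g x ∂ρ₂ + ∫ x, g x ∂(ν.restrict s)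
      + ∫ x, g x ∂(μ.restrict sᶜ) := by
    conv_lhs => rw [← Measure.restrict_add_restrict_compl (μ := ν) hs]
    rw [integral_add_measure (hint _) (hint _), ← e2,
      integral_add_measure (hint _) (hint _)]
    ring
  have hdiff : ∫ x, g x ∂μ - ∫ x, g x ∂ν = ∫ x, g x ∂ρ₁ - ∫ x, g x ∂ρ₂ := by
    rw [hsplitμ, hsplitν]; ring
  have hr1nn : 0 ≤ r1 := hr1 ▸ ENNReal.toReal_nonneg
  rcases eq_or_lt_of_le hr1nn with h0 | hpos
  · -- zero mass case
    have hz1 : ρ₁ = 0 := by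
      rw [← Measure.measure_univ_eq_zero]
      have := h0.symm
      rw [hr1] at this
      exact (ENNReal.toReal_eq_zero_iff _).mp this |>.resolve_right (measure_ne_top _ _)
    have hz2 : ρ₂ = 0 := by
      rw [← Measure.measure_univ_eq_zero]
      have : r2 = 0 := by rw [hr12, ← h0]
      rw [hr2] at this
      exact (ENNReal.toReal_eq_zero_iff _).mp this |>.resolve_right (measure_ne_top _ _)
    rw [hdiff, hz1, hz2]
    simp only [integral_zero_measure, sub_zero]
    exact mul_nonneg hc (tvDist_nonneg μ ν)
  · -- positive mass case
    have hkey : r1 * (∫ x, g x ∂ρ₁ - ∫ x, g x ∂ρ₂) ≤ c * (r1 * r1) := by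
      have hinner : ∀ x, g x * r1 - ∫ y, g y ∂ρ₂ ≤ c * r1 := by
        intro x
        have h' : ∫ y, (g x - g y) ∂ρ₂ ≤ ∫ _, c ∂ρ₂ :=
          integral_mono ((integrable_const (g x)).sub (hint ρ₂))
            (integrable_const c) fun y => by have := hosc x y; simpa using this
        rw [integral_sub (integrable_const (g x)) (hint ρ₂), hconst ρ₂, hconst ρ₂,
          ← hr2, hr12] at h'
        nlinarith [h']
      have houter : ∫ x, (g x * r1 - ∫ y, g y ∂ρ₂) ∂ρ₁ ≤ ∫ _, c * r1 ∂ρ₁ :=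
        integral_mono (((hint ρ₁).mul_const r1).sub (integrable_const _))
          (integrable_const _) hinner
      rw [integral_sub ((hint ρ₁).mul_const r1) (integrable_const _),
        integral_mul_const, hconst ρ₁ (∫ y, g y ∂ρ₂), hconst ρ₁ (c * r1), ← hr1] at houter
      nlinarith [houter]
    have hdle : ∫ x, g x ∂ρ₁ - ∫ x, g x ∂ρ₂ ≤ c * r1 :=
      le_of_mul_le_mul_left (by calc r1 * (∫ x, g x ∂ρ₁ - ∫ x, g x ∂ρ₂)
          ≤ c * (r1 * r1) := hkey
        _ = r1 * (c * r1) := by ring) hpos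
    have hr1tv : r1 ≤ tvDist μ ν := by
      have : r1 = (μ s).toReal - (ν s).toReal := by linarith
      rw [this]
      exact (le_abs_self _).trans (le_tvDist μ ν hs)
    rw [hdiff]
    exact hdle.trans (mul_le_mul_of_nonneg_left hr1tv hc)

end Aux

section Kernel

variable {X : Type*} [MeasurableSpace X]

/-- Action of a kernel on a bounded function. -/
noncomputable def Pop (κ : Kernel X X) (g : X → ℝ) : X → ℝ := fun x => ∫ y, g y ∂κ x

lemma measurable_Pop (κ : Kernel X X) [IsMarkovKernel κ] {g : X → ℝ} (hg : Measurable g) :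
    Measurable (Pop κ g) := by
  have : StronglyMeasurable (fun x => ∫ y, (fun (_ : X) (y : X) => g y) x y ∂κ x) :=
    StronglyMeasurable.integral_kernel_prod_right
      (hg.comp measurable_snd).stronglyMeasurable
  exact this.measurable

lemma Pop_bound (κ : Kernel X X) [IsMarkovKernel κ] {g : X → ℝ} {c : ℝ}
    (hb : ∀ x, |g x| ≤ c) (x : X) : |Pop κ g x| ≤ c := by
  have h := norm_integral_le_of_norm_le_const (μ := κ x) (f := g) (C := c)
    (ae_of_all _ fun y => by simpa [Real.norm_eq_abs] using hb y)
  simpa [Pop, Real.norm_eq_abs, measure_univ] using h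

lemma Pop_osc (κ : Kernel X X) [IsMarkovKernel κ] {a : ℝ}
    (hD : ∀ x y : X, tvDist (κ x) (κ y) ≤ 1 - a) (ha : a ≤ 1)
    {g : X → ℝ} (hg : Measurable g) {b c : ℝ} (hb : ∀ x, |g x| ≤ b)
    (hosc : ∀ x y, |g x - g y| ≤ c) (x y : X) :
    |Pop κ g x - Pop κ g y| ≤ (1 - a) * c := by
  have hc : 0 ≤ c := (abs_nonneg _).trans (hosc x x)
  have key : ∀ u v : X, Pop κ g u - Pop κ g v ≤ (1 - a) * c := by
    intro u v
    have h1 : Pop κ g u - Pop κ g v ≤ c * tvDist (κ u) (κ v) :=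
      integral_sub_le_osc_mul_tv (κ u) (κ v) hg hc hb fun x y =>
        (le_abs_self _).trans (hosc x y)
    refine h1.trans ?_
    rw [mul_comm]
    exact mul_le_mul_of_nonneg_right (hD u v) hc
  rw [abs_sub_le_iff]
  exact ⟨key x y, key y x⟩

lemma isFiniteMeasure_bind (μ : Measure X) [IsFiniteMeasure μ]
    (κ : Kernel X X) [IsMarkovKernel κ] : IsFiniteMeasure (μ.bind κ) := by
  constructor
  rw [Measure.bind_apply MeasurableSet.univ κ.measurable.aemeasurable]
  calc ∫⁻ x, κ x Set.univ ∂μ = ∫⁻ _, 1 ∂μ := by simp [measure_univ]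
    _ < ⊤ := by simpa [lintegral_const] using measure_lt_top μ Set.univ

/-- Bochner integral against a bind of a Markov kernel, for bounded functions. -/
lemma integral_bind_of_bdd (μ : Measure X) [IsFiniteMeasure μ]
    (κ : Kernel X X) [IsMarkovKernel κ] {g : X → ℝ} {c : ℝ}
    (hg : Measurable g) (hb : ∀ x, |g x| ≤ c) :
    ∫ x, g x ∂(μ.bind κ) = ∫ x, Pop κ g x ∂μ := by
  haveI := isFiniteMeasure_bind μ κ
  have hgi : Integrable g (μ.bind κ) := integrable_of_bdd hg hb
  -- replace c by max c 0
  obtain ⟨c, hc, hb⟩ : ∃ c', 0 ≤ c' ∧ ∀ x, |g x| ≤ c' :=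
    ⟨max c 0, le_max_right _ _, fun x => (hb x).trans (le_max_left _ _)⟩
  -- positive and negative parts as lintegrals
  have hbind : ∀ {f : X → ℝ≥0∞}, Measurable f →
      ∫⁻ x, f x ∂(μ.bind κ) = ∫⁻ x, (∫⁻ y, f y ∂κ x) ∂μ :=
    fun hf => Measure.lintegral_bind κ.measurable.aemeasurable hf.aemeasurable
  have hposle : ∀ x, ∫⁻ y, ENNReal.ofReal (g y) ∂κ x ≠ ⊤ := by
    intro x
    have h1 : ∫⁻ y, ENNReal.ofReal (g y) ∂κ x ≤ ∫⁻ _, ENNReal.ofReal c ∂κ x :=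
      lintegral_mono fun y => ENNReal.ofReal_le_ofReal ((le_abs_self _).trans (hb y))
    refine ne_of_lt (lt_of_le_of_lt h1 ?_)
    simp [lintegral_const, measure_univ, ENNReal.ofReal_lt_top]
  have hnegle : ∀ x, ∫⁻ y, ENNReal.ofReal (-g y) ∂κ x ≠ ⊤ := by
    intro x
    have h1 : ∫⁻ y, ENNReal.ofReal (-g y) ∂κ x ≤ ∫⁻ _, ENNReal.ofReal c ∂κ x :=
      lintegral_mono fun y => ENNReal.ofReal_le_ofReal ((neg_le_abs _).trans (hb y))
    refine ne_of_lt (lt_of_le_of_lt h1 ?_)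
    simp [lintegral_const, measure_univ, ENNReal.ofReal_lt_top]
  have hpopeq : ∀ x, Pop κ g x
      = (∫⁻ y, ENNReal.ofReal (g y) ∂κ x).toReal
        - (∫⁻ y, ENNReal.ofReal (-g y) ∂κ x).toReal := by
    intro x
    exact integral_eq_lintegral_pos_part_sub_lintegral_neg_part (integrable_of_bdd hg hb)
  have hmeas1 : Measurable fun x => (∫⁻ y, ENNReal.ofReal (g y) ∂κ x).toReal :=
    (Measurable.lintegral_kernel (hg.ennreal_ofReal)).ennreal_toReal
  have hmeas2 : Measurable fun x => (∫⁻ y, ENNReal.ofReal (-g y) ∂κ x).toReal :=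
    (Measurable.lintegral_kernel (hg.neg.ennreal_ofReal)).ennreal_toReal
  have hb1 : ∀ x, (∫⁻ y, ENNReal.ofReal (g y) ∂κ x).toReal ≤ c := by
    intro x
    rw [← ENNReal.toReal_ofReal hc]
    refine ENNReal.toReal_mono (by simp) ?_
    refine le_trans (lintegral_mono (g := fun _ => ENNReal.ofReal c) fun y =>
      ENNReal.ofReal_le_ofReal ((le_abs_self _).trans (hb y))) ?_
    simp [lintegral_const, measure_univ]
  have hb2 : ∀ x, (∫⁻ y, ENNReal.ofReal (-g y) ∂κ x).toReal ≤ c := by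
    intro x
    rw [← ENNReal.toReal_ofReal hc]
    refine ENNReal.toReal_mono (by simp) ?_
    refine le_trans (lintegral_mono (g := fun _ => ENNReal.ofReal c) fun y =>
      ENNReal.ofReal_le_ofReal ((neg_le_abs _).trans (hb y))) ?_
    simp [lintegral_const, measure_univ]
  have hint1 : Integrable (fun x => (∫⁻ y, ENNReal.ofReal (g y) ∂κ x).toReal) μ :=
    integrable_of_bdd hmeas1 fun x => abs_le.2 ⟨le_trans (neg_nonpos.2 hc) ENNReal.toReal_nonneg, hb1 x⟩
  have hint2 : Integrable (fun x => (∫⁻ y, ENNReal.ofReal (-g y) ∂κ x).toReal) μ :=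
    integrable_of_bdd hmeas2 fun x => abs_le.2 ⟨le_trans (neg_nonpos.2 hc) ENNReal.toReal_nonneg, hb2 x⟩
  calc ∫ x, g x ∂(μ.bind κ)
      = (∫⁻ x, ENNReal.ofReal (g x) ∂(μ.bind κ)).toReal
        - (∫⁻ x, ENNReal.ofReal (-g x) ∂(μ.bind κ)).toReal :=
        integral_eq_lintegral_pos_part_sub_lintegral_neg_part hgi
    _ = (∫⁻ x, (∫⁻ y, ENNReal.ofReal (g y) ∂κ x) ∂μ).toReal
        - (∫⁻ x, (∫⁻ y, ENNReal.ofReal (-g y) ∂κ x) ∂μ).toReal := by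
        rw [hbind hg.ennreal_ofReal, hbind (f := fun x => ENNReal.ofReal (-g x)) hg.neg.ennreal_ofReal]
    _ = (∫ x, (∫⁻ y, ENNReal.ofReal (g y) ∂κ x).toReal ∂μ)
        - (∫ x, (∫⁻ y, ENNReal.ofReal (-g y) ∂κ x).toReal ∂μ) := by
        rw [integral_toReal (Measurable.lintegral_kernel hg.ennreal_ofReal).aemeasurable
            (ae_of_all _ fun x => lt_top_iff_ne_top.2 (hposle x)),
          integral_toReal (Measurable.lintegral_kernel (f := fun y => ENNReal.ofReal (-g y)) hg.neg.ennreal_ofReal).aemeasurable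
            (ae_of_all _ fun x => lt_top_iff_ne_top.2 (hnegle x))]
    _ = ∫ x, ((∫⁻ y, ENNReal.ofReal (g y) ∂κ x).toReal
        - (∫⁻ y, ENNReal.ofReal (-g y) ∂κ x).toReal) ∂μ := (integral_sub hint1 hint2).symm
    _ = ∫ x, Pop κ g x ∂μ := by
        congr 1
        ext x
        rw [hpopeq x]

end Kernel

section Iter

variable {X : Type*} [MeasurableSpace X]

lemma iter_props (κ : Kernel X X) [IsMarkovKernel κ] {a : ℝ}
    (hD : ∀ x y : X, tvDist (κ x) (κ y) ≤ 1 - a) (ha : a ≤ 1)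
    {g : X → ℝ} (hg : Measurable g) {b : ℝ} (hb : ∀ x, |g x| ≤ b) (d : ℕ) :
    Measurable ((Pop κ)^[d] g) ∧ (∀ x, |(Pop κ)^[d] g x| ≤ b) ∧
      (∀ x y, |(Pop κ)^[d] g x - (Pop κ)^[d] g y| ≤ (1 - a) ^ d * (2 * b)) := by
  induction d with
  | zero =>
    refine ⟨hg, hb, fun x y => ?_⟩
    simp only [Function.iterate_zero, id_eq, pow_zero, one_mul]
    calc |g x - g y| ≤ |g x| + |g y| := abs_sub _ _
      _ ≤ 2 * b := by have := hb x; have := hb y; linarith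
  | succ d ih =>
    obtain ⟨hm, hbd, hosc⟩ := ih
    rw [Function.iterate_succ_apply']
    refine ⟨measurable_Pop κ hm, fun x => Pop_bound κ hbd x, fun x y => ?_⟩
    have h := Pop_osc κ hD ha hm hbd hosc x y
    calc |Pop κ ((Pop κ)^[d] g) x - Pop κ ((Pop κ)^[d] g) y|
        ≤ (1 - a) * ((1 - a) ^ d * (2 * b)) := h
      _ = (1 - a) ^ (d + 1) * (2 * b) := by ring

lemma iter_integral (κ : Kernel X X) [IsMarkovKernel κ] {a : ℝ}
    (hD : ∀ x y : X, tvDist (κ x) (κ y) ≤ 1 - a) (ha : a ≤ 1)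
    (μ : Measure X) [IsProbabilityMeasure μ] (hμ : μ.bind (fun x => κ x) = μ)
    {g : X → ℝ} (hg : Measurable g) {b : ℝ} (hb : ∀ x, |g x| ≤ b) (d : ℕ) :
    ∫ x, (Pop κ)^[d] g x ∂μ = ∫ x, g x ∂μ := by
  induction d with
  | zero => simp
  | succ d ih =>
    obtain ⟨hm, hbd, _⟩ := iter_props κ hD ha hg hb d
    rw [Function.iterate_succ_apply', ← integral_bind_of_bdd μ κ hm hbd]
    have : μ.bind (fun x => κ x) = μ.bind κ := rfl
    rw [← this, hμ, ih]

lemma iter_dev (κ : Kernel X X) [IsMarkovKernel κ] {a : ℝ}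
    (hD : ∀ x y : X, tvDist (κ x) (κ y) ≤ 1 - a) (ha : a ≤ 1)
    (μ : Measure X) [IsProbabilityMeasure μ] (hμ : μ.bind (fun x => κ x) = μ)
    {g : X → ℝ} (hg : Measurable g) {b : ℝ} (hb : ∀ x, |g x| ≤ b) (d : ℕ) (x : X) :
    |(Pop κ)^[d] g x - ∫ y, g y ∂μ| ≤ (1 - a) ^ d * (2 * b) := by
  obtain ⟨hm, hbd, hosc⟩ := iter_props κ hD ha hg hb d
  have hmean : ∫ y, g y ∂μ = ∫ y, (Pop κ)^[d] g y ∂μ := (iter_integral κ hD ha μ hμ hg hb d).symm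
  have heq : (Pop κ)^[d] g x - ∫ y, g y ∂μ = ∫ y, ((Pop κ)^[d] g x - (Pop κ)^[d] g y) ∂μ := by
    rw [integral_sub (integrable_const _) (integrable_of_bdd hm hbd), integral_const]
    simp [measure_univ, hmean]
  rw [heq]
  have := norm_integral_le_of_norm_le_const (μ := μ)
    (f := fun y => (Pop κ)^[d] g x - (Pop κ)^[d] g y) (C := (1 - a) ^ d * (2 * b))
    (ae_of_all _ fun y => by simpa [Real.norm_eq_abs] using hosc x y)
  simpa [Real.norm_eq_abs, measure_univ] using this

end Iter

section Star

variable {X : Type*} [TopologicalSpace X] [PolishSpace X] [MeasurableSpace X] [BorelSpace X]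
  {Ω : Type*} [mΩ : MeasurableSpace Ω]

lemma star_nonneg (κ : Kernel X X) [IsMarkovKernel κ]
    (Pr : Measure Ω) [IsProbabilityMeasure Pr]
    (Xc : ℕ → Ω → X) (𝓕 : Filtration ℕ mΩ) (hadapt : StronglyAdapted 𝓕 Xc)
    (hmark : ∀ (n : ℕ) (A : Set X), MeasurableSet A →
      (Pr[fun ω => Set.indicator A (fun _ => (1 : ℝ)) (Xc (n + 1) ω) | 𝓕 n]
        =ᵐ[Pr] fun ω => ((κ (Xc n ω)) A).toReal))
    (n : ℕ) {W : Ω → ℝ} (hW : StronglyMeasurable[𝓕 n] W) {cW : ℝ}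
    (hWb : ∀ ω, |W ω| ≤ cW) (hW0 : ∀ ω, 0 ≤ W ω) {h : X → ℝ} (hh : Measurable h)
    {ch : ℝ} (hhb : ∀ x, |h x| ≤ ch) :
    ∫ ω, W ω * h (Xc (n + 1) ω) ∂Pr = ∫ ω, W ω * (Pop κ h) (Xc n ω) ∂Pr := by
  have hXm : ∀ k, Measurable (Xc k) := fun k => ((hadapt k).mono (𝓕.le k)).measurable
  have hWm : Measurable W := (hW.mono (𝓕.le n)).measurable
  -- the real-integral identity for indicators
  have hI : ∀ A : Set X, MeasurableSet A →
      ∫ ω, W ω * Set.indicator A (fun _ => (1:ℝ)) (Xc (n + 1) ω) ∂Pr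
        = ∫ ω, W ω * ((κ (Xc n ω)) A).toReal ∂Pr := by
    intro A hA
    set Z : Ω → ℝ := fun ω => Set.indicator A (fun _ => (1:ℝ)) (Xc (n + 1) ω) with hZ
    have hZm : Measurable Z := (measurable_const.indicator hA).comp (hXm (n + 1))
    have hZb : ∀ ω, |Z ω| ≤ 1 := by
      intro ω
      by_cases hω : Xc (n + 1) ω ∈ A <;>
        simp [hZ, Set.indicator_of_mem, Set.indicator_of_notMem, hω]
    have hZint : Integrable Z Pr := integrable_of_bdd hZm hZb
    have hmul := condExp_stronglyMeasurable_mul_of_bound (𝓕.le n) hW hZint cW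
      (ae_of_all _ fun ω => by simpa [Real.norm_eq_abs] using hWb ω)
    have hWZint : Integrable (fun ω => W ω * Z ω) Pr :=
      integrable_of_bdd (hWm.mul hZm) (c := cW * 1) fun ω => by
        rw [abs_mul]
        exact mul_le_mul (hWb ω) (hZb ω) (abs_nonneg _) ((abs_nonneg _).trans (hWb ω))
    calc ∫ ω, W ω * Z ω ∂Pr
        = ∫ ω, (Pr[fun ω => W ω * Z ω | 𝓕 n]) ω ∂Pr := (integral_condExp (𝓕.le n)).symm
      _ = ∫ ω, (W * Pr[Z | 𝓕 n]) ω ∂Pr := integral_congr_ae hmul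
      _ = ∫ ω, W ω * ((κ (Xc n ω)) A).toReal ∂Pr := by
          refine integral_congr_ae ?_
          filter_upwards [hmark n A hA] with ω hω
          simp only [Pi.mul_apply]
          rw [hω]
  -- measures
  set wnn : Ω → ℝ≥0 := fun ω => Real.toNNReal (W ω) with hwnn
  have hwnnm : Measurable wnn := hWm.real_toNNReal
  set Q : Measure Ω := Pr.withDensity (fun ω => (wnn ω : ℝ≥0∞)) with hQ
  have hcoe : ∀ ω, ((wnn ω : ℝ≥0∞)) = ENNReal.ofReal (W ω) := fun ω => rfl
  haveI : IsFiniteMeasure Q := by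
    constructor
    rw [hQ, withDensity_apply _ MeasurableSet.univ, Measure.restrict_univ]
    calc ∫⁻ ω, (wnn ω : ℝ≥0∞) ∂Pr ≤ ∫⁻ _, ENNReal.ofReal cW ∂Pr :=
          lintegral_mono fun ω => by
            rw [hcoe]; exact ENNReal.ofReal_le_ofReal ((le_abs_self _).trans (hWb ω))
      _ < ⊤ := by simpa [lintegral_const, measure_univ] using ENNReal.ofReal_lt_top
  -- the two measures on X
  set ν₁ : Measure X := Q.map (Xc (n + 1)) with hν₁
  set ν₂ : Measure X := (Q.map (Xc n)).bind κ with hν₂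
  have hQmapfin : IsFiniteMeasure (Q.map (Xc n)) := by
    constructor
    rw [Measure.map_apply (hXm n) MeasurableSet.univ]
    exact measure_lt_top Q _
  haveI := hQmapfin
  -- auxiliary: real integrals against Q
  have hQint : ∀ (V : Ω → ℝ), Measurable V → (∀ ω, |V ω| ≤ ch) →
      ∫ ω, V ω ∂Q = ∫ ω, W ω * V ω ∂Pr := by
    intro V hV hVb
    rw [hQ, integral_withDensity_eq_integral_smul hwnnm]
    congr 1
    ext ω
    rw [NNReal.smul_def, smul_eq_mul, hwnn]
    simp [Real.coe_toNNReal _ (hW0 ω)]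
  -- equality of measures
  have hνeq : ν₁ = ν₂ := by
    refine Measure.ext fun A hA => ?_
    have hpre : MeasurableSet (Xc (n + 1) ⁻¹' A) := hXm (n + 1) hA
    -- LHS
    have hL : ν₁ A = ENNReal.ofReal (∫ ω, W ω * Set.indicator A (fun _ => (1:ℝ))
        (Xc (n + 1) ω) ∂Pr) := by
      have : (fun ω => W ω * Set.indicator A (fun _ => (1:ℝ)) (Xc (n + 1) ω))
          = fun ω => Set.indicator (Xc (n + 1) ⁻¹' A) W ω := by
        ext ω
        by_cases hω : Xc (n + 1) ω ∈ A <;>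
          simp [Set.indicator_of_mem, Set.indicator_of_notMem, hω, Set.mem_preimage]
      rw [this, integral_indicator hpre]
      rw [hν₁, Measure.map_apply (hXm (n + 1)) hA, hQ, withDensity_apply _ hpre]
      rw [ofReal_integral_eq_lintegral_ofReal
        (integrable_of_bdd (μ := Pr.restrict (Xc (n + 1) ⁻¹' A)) hWm hWb)
        (ae_of_all _ hW0)]
      exact lintegral_congr fun ω => (hcoe ω).symm
    -- RHS
    have hR : ν₂ A = ENNReal.ofReal (∫ ω, W ω * ((κ (Xc n ω)) A).toReal ∂Pr) := by
      rw [hν₂, Measure.bind_apply hA κ.measurable.aemeasurable,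
        lintegral_map (κ.measurable_coe hA) (hXm n), hQ,
        lintegral_withDensity_eq_lintegral_mul Pr (hwnnm.coe_nnreal_ennreal)
          (g := fun ω => (κ (Xc n ω)) A) ((κ.measurable_coe hA).comp (hXm n))]
      rw [ofReal_integral_eq_lintegral_ofReal]
      · refine lintegral_congr fun ω => ?_
        simp only [Pi.mul_apply]
        rw [ENNReal.ofReal_mul (hW0 ω), ENNReal.ofReal_toReal (measure_ne_top _ _), hcoe]
      · refine integrable_of_bdd (hWm.mul ((κ.measurable_coe hA).comp (hXm n)).ennreal_toReal)
          (c := cW * 1) fun ω => ?_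
        rw [abs_mul]
        refine mul_le_mul (hWb ω) ?_ (abs_nonneg _) ((abs_nonneg _).trans (hWb ω))
        rw [abs_of_nonneg ENNReal.toReal_nonneg]
        simpa using ENNReal.toReal_mono (by simp) (measure_mono (Set.subset_univ A)
          (μ := κ (Xc n ω)))
      · exact ae_of_all _ fun ω => mul_nonneg (hW0 ω) ENNReal.toReal_nonneg
    rw [hL, hR, hI A hA]
  -- conclude
  have hPopm : Measurable (Pop κ h) := measurable_Pop κ hh
  have hPopb : ∀ x, |Pop κ h x| ≤ ch := Pop_bound κ hhb
  calc ∫ ω, W ω * h (Xc (n + 1) ω) ∂Pr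
      = ∫ ω, h (Xc (n + 1) ω) ∂Q := (hQint _ (hh.comp (hXm (n + 1)))
        (fun ω => hhb _)).symm
    _ = ∫ x, h x ∂ν₁ := by
        rw [hν₁, integral_map (hXm (n + 1)).aemeasurable hh.aestronglyMeasurable]
    _ = ∫ x, h x ∂ν₂ := by rw [hνeq]
    _ = ∫ x, Pop κ h x ∂(Q.map (Xc n)) := by
        rw [hν₂]; exact integral_bind_of_bdd _ κ hh hhb
    _ = ∫ ω, Pop κ h (Xc n ω) ∂Q := integral_map (hXm n).aemeasurable
        hPopm.aestronglyMeasurable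
    _ = ∫ ω, W ω * (Pop κ h) (Xc n ω) ∂Pr := hQint _ (hPopm.comp (hXm n)) fun ω => hPopb _

end Star

section Star2

variable {X : Type*} [TopologicalSpace X] [PolishSpace X] [MeasurableSpace X] [BorelSpace X]
  {Ω : Type*} [mΩ : MeasurableSpace Ω]

lemma star (κ : Kernel X X) [IsMarkovKernel κ]
    (Pr : Measure Ω) [IsProbabilityMeasure Pr]
    (Xc : ℕ → Ω → X) (𝓕 : Filtration ℕ mΩ) (hadapt : StronglyAdapted 𝓕 Xc)
    (hmark : ∀ (n : ℕ) (A : Set X), MeasurableSet A →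
      (Pr[fun ω => Set.indicator A (fun _ => (1 : ℝ)) (Xc (n + 1) ω) | 𝓕 n]
        =ᵐ[Pr] fun ω => ((κ (Xc n ω)) A).toReal))
    (n : ℕ) {W : Ω → ℝ} (hW : StronglyMeasurable[𝓕 n] W) {cW : ℝ}
    (hWb : ∀ ω, |W ω| ≤ cW) {h : X → ℝ} (hh : Measurable h)
    {ch : ℝ} (hhb : ∀ x, |h x| ≤ ch) :
    ∫ ω, W ω * h (Xc (n + 1) ω) ∂Pr = ∫ ω, W ω * (Pop κ h) (Xc n ω) ∂Pr := by
  have hXm : ∀ k, Measurable (Xc k) := fun k => ((hadapt k).mono (𝓕.le k)).measurable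
  have hWm : Measurable W := (hW.mono (𝓕.le n)).measurable
  set Wp : Ω → ℝ := fun ω => max (W ω) 0 with hWp
  set Wm : Ω → ℝ := fun ω => max (-W ω) 0 with hWm'
  have hWpS : StronglyMeasurable[𝓕 n] Wp := (hW.measurable.max measurable_const).stronglyMeasurable
  have hWmS : StronglyMeasurable[𝓕 n] Wm := (hW.measurable.neg.max measurable_const).stronglyMeasurable
  have hWpb : ∀ ω, |Wp ω| ≤ max cW 0 := fun ω => by
    rw [abs_of_nonneg (le_max_right _ _)]
    exact max_le_max ((le_abs_self _).trans (hWb ω)) le_rfl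
  have hWmb : ∀ ω, |Wm ω| ≤ max cW 0 := fun ω => by
    rw [abs_of_nonneg (le_max_right _ _)]
    exact max_le_max ((neg_le_abs _).trans (hWb ω)) le_rfl
  have hWp0 : ∀ ω, 0 ≤ Wp ω := fun ω => le_max_right _ _
  have hWm0 : ∀ ω, 0 ≤ Wm ω := fun ω => le_max_right _ _
  have hsub : ∀ ω, W ω = Wp ω - Wm ω := fun ω => by
    rw [hWp, hWm']
    dsimp only
    rcases le_total 0 (W ω) with h' | h'
    · rw [max_eq_left h', max_eq_right (neg_nonpos.2 h')]; ring
    · rw [max_eq_right h', max_eq_left (neg_nonneg.2 h')]; ring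
  have hp := star_nonneg κ Pr Xc 𝓕 hadapt hmark n hWpS hWpb hWp0 hh hhb
  have hm := star_nonneg κ Pr Xc 𝓕 hadapt hmark n hWmS hWmb hWm0 hh hhb
  have hPopm : Measurable (Pop κ h) := measurable_Pop κ hh
  have hPopb : ∀ x, |Pop κ h x| ≤ ch := Pop_bound κ hhb
  have hintp : ∀ (V : Ω → ℝ), Measurable V → (∀ ω, |V ω| ≤ ch) →
      ∀ (U : Ω → ℝ), Measurable U → (∀ ω, |U ω| ≤ max cW 0) →
      Integrable (fun ω => U ω * V ω) Pr := by
    intro V hV hVb U hU hUb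
    refine integrable_of_bdd (hU.mul hV) (c := max cW 0 * max ch 0) fun ω => ?_
    rw [abs_mul]
    exact mul_le_mul (hUb ω) ((hVb ω).trans (le_max_left _ _)) (abs_nonneg _)
      (le_max_right _ _)
  calc ∫ ω, W ω * h (Xc (n + 1) ω) ∂Pr
      = ∫ ω, (Wp ω * h (Xc (n + 1) ω) - Wm ω * h (Xc (n + 1) ω)) ∂Pr := by
        congr 1; ext ω; rw [hsub ω]; ring
    _ = ∫ ω, Wp ω * h (Xc (n + 1) ω) ∂Pr - ∫ ω, Wm ω * h (Xc (n + 1) ω) ∂Pr :=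
        integral_sub
          (hintp _ (hh.comp (hXm (n+1))) (fun ω => hhb _) Wp (hWm.max measurable_const) hWpb)
          (hintp _ (hh.comp (hXm (n+1))) (fun ω => hhb _) Wm (hWm.neg.max measurable_const) hWmb)
    _ = ∫ ω, Wp ω * Pop κ h (Xc n ω) ∂Pr - ∫ ω, Wm ω * Pop κ h (Xc n ω) ∂Pr := by
        rw [hp, hm]
    _ = ∫ ω, (Wp ω * Pop κ h (Xc n ω) - Wm ω * Pop κ h (Xc n ω)) ∂Pr :=
        (integral_sub
          (hintp _ (hPopm.comp (hXm n)) (fun ω => hPopb _) Wp (hWm.max measurable_const) hWpb)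
          (hintp _ (hPopm.comp (hXm n)) (fun ω => hPopb _) Wm (hWm.neg.max measurable_const) hWmb)).symm
    _ = ∫ ω, W ω * Pop κ h (Xc n ω) ∂Pr := by
        congr 1; ext ω; rw [hsub ω]; ring

lemma chain (κ : Kernel X X) [IsMarkovKernel κ]
    (Pr : Measure Ω) [IsProbabilityMeasure Pr]
    (Xc : ℕ → Ω → X) (𝓕 : Filtration ℕ mΩ) (hadapt : StronglyAdapted 𝓕 Xc)
    (hmark : ∀ (n : ℕ) (A : Set X), MeasurableSet A →
      (Pr[fun ω => Set.indicator A (fun _ => (1 : ℝ)) (Xc (n + 1) ω) | 𝓕 n]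
        =ᵐ[Pr] fun ω => ((κ (Xc n ω)) A).toReal))
    (n : ℕ) {W : Ω → ℝ} (hW : StronglyMeasurable[𝓕 n] W) {cW : ℝ}
    (hWb : ∀ ω, |W ω| ≤ cW) (d : ℕ) :
    ∀ {h : X → ℝ} {ch : ℝ}, Measurable h → (∀ x, |h x| ≤ ch) →
    ∫ ω, W ω * h (Xc (n + d) ω) ∂Pr = ∫ ω, W ω * ((Pop κ)^[d] h) (Xc n ω) ∂Pr := by
  induction d with
  | zero => intro h ch hh hhb; simp
  | succ d ih =>
    intro h ch hh hhb
    have hstep : ∫ ω, W ω * h (Xc (n + (d + 1)) ω) ∂Pr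
        = ∫ ω, W ω * (Pop κ h) (Xc (n + d) ω) ∂Pr := by
      have : n + (d + 1) = (n + d) + 1 := rfl
      rw [this]
      exact star κ Pr Xc 𝓕 hadapt hmark (n + d)
        (hW.mono (𝓕.mono (Nat.le_add_right n d))) hWb hh hhb
    rw [hstep, ih (measurable_Pop κ hh) (Pop_bound κ hhb)]
    simp only [← Function.iterate_succ_apply]

end Star2

section Cov

variable {X : Type*} [TopologicalSpace X] [PolishSpace X] [MeasurableSpace X] [BorelSpace X]
  {Ω : Type*} [mΩ : MeasurableSpace Ω]

lemma cov_bound (κ : Kernel X X) [IsMarkovKernel κ] {a : ℝ} (ha : a ∈ Set.Ioo (0:ℝ) 1)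
    (hD : ∀ x y : X, tvDist (κ x) (κ y) ≤ 1 - a)
    (μ : Measure X) [IsProbabilityMeasure μ] (hμ : μ.bind (fun x => κ x) = μ)
    (Pr : Measure Ω) [IsProbabilityMeasure Pr]
    (Xc : ℕ → Ω → X) (𝓕 : Filtration ℕ mΩ) (hadapt : StronglyAdapted 𝓕 Xc)
    (hmark : ∀ (n : ℕ) (A : Set X), MeasurableSet A →
      (Pr[fun ω => Set.indicator A (fun _ => (1 : ℝ)) (Xc (n + 1) ω) | 𝓕 n]
        =ᵐ[Pr] fun ω => ((κ (Xc n ω)) A).toReal))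
    {g : X → ℝ} (hg : Measurable g) {b : ℝ} (hb : ∀ x, |g x| ≤ b)
    (j d : ℕ) :
    ∫ ω, (g (Xc j ω) - ∫ x, g x ∂μ) * (g (Xc (j + d) ω) - ∫ x, g x ∂μ) ∂Pr
      ≤ (1 - a) ^ d * (4 * b ^ 2) := by
  have ha1 : a ≤ 1 := ha.2.le
  have hXm : ∀ k, Measurable (Xc k) := fun k => ((hadapt k).mono (𝓕.le k)).measurable
  set m : ℝ := ∫ x, g x ∂μ with hm
  have hmb : |m| ≤ b := by
    have := norm_integral_le_of_norm_le_const (μ := μ) (f := g) (C := b)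
      (ae_of_all _ fun x => by simpa [Real.norm_eq_abs] using hb x)
    simpa [Real.norm_eq_abs, measure_univ] using this
  set W : Ω → ℝ := fun ω => g (Xc j ω) - m with hW
  have hWS : StronglyMeasurable[𝓕 j] W :=
    ((hg.comp (hadapt j).measurable).sub measurable_const).stronglyMeasurable
  have hWb : ∀ ω, |W ω| ≤ 2 * b := fun ω => by
    rw [hW]
    calc |g (Xc j ω) - m| ≤ |g (Xc j ω)| + |m| := abs_sub _ _
      _ ≤ 2 * b := by have := hb (Xc j ω); linarith
  -- apply the chain lemma
  have hch := chain κ Pr Xc 𝓕 hadapt hmark j hWS hWb d hg hb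
  have hWint : Integrable W Pr := integrable_of_bdd
    ((hg.comp (hXm j)).sub measurable_const) hWb
  have hsplit : ∫ ω, W ω * (g (Xc (j + d) ω) - m) ∂Pr
      = ∫ ω, W ω * (((Pop κ)^[d] g) (Xc j ω) - m) ∂Pr := by
    have h1 : ∫ ω, W ω * (g (Xc (j + d) ω) - m) ∂Pr
        = ∫ ω, W ω * g (Xc (j + d) ω) ∂Pr - ∫ ω, W ω * m ∂Pr := by
      rw [← integral_sub]
      · congr 1; ext ω; ring
      · exact integrable_of_bdd (((hg.comp (hXm j)).sub measurable_const).mul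
          (hg.comp (hXm (j + d)))) (c := 2 * b * b) fun ω => by
            rw [abs_mul]
            exact mul_le_mul (hWb ω) (hb _) (abs_nonneg _)
              (le_trans (abs_nonneg _) (hWb ω))
      · exact hWint.mul_const m
    obtain ⟨him, hib, _⟩ := iter_props κ hD ha1 hg hb d
    have h2 : ∫ ω, W ω * (((Pop κ)^[d] g) (Xc j ω) - m) ∂Pr
        = ∫ ω, W ω * ((Pop κ)^[d] g) (Xc j ω) ∂Pr - ∫ ω, W ω * m ∂Pr := by
      rw [← integral_sub]
      · congr 1; ext ω; ring
      · exact integrable_of_bdd (((hg.comp (hXm j)).sub measurable_const).mul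
          (him.comp (hXm j))) (c := 2 * b * b) fun ω => by
            rw [abs_mul]
            exact mul_le_mul (hWb ω) (hib _) (abs_nonneg _)
              (le_trans (abs_nonneg _) (hWb ω))
      · exact hWint.mul_const m
    rw [h1, h2, hch]
  rw [hsplit]
  -- pointwise bound
  have hdev := iter_dev κ hD ha1 μ hμ hg hb d
  have hptw : ∀ ω, W ω * (((Pop κ)^[d] g) (Xc j ω) - m) ≤ (1 - a) ^ d * (4 * b ^ 2) := by
    intro ω
    have h1 : |W ω * (((Pop κ)^[d] g) (Xc j ω) - m)| ≤ (2 * b) * ((1 - a) ^ d * (2 * b)) := by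
      rw [abs_mul]
      exact mul_le_mul (hWb ω) (hdev (Xc j ω)) (abs_nonneg _)
        (le_trans (abs_nonneg _) (hWb ω))
    calc W ω * (((Pop κ)^[d] g) (Xc j ω) - m) ≤ |W ω * (((Pop κ)^[d] g) (Xc j ω) - m)| :=
        le_abs_self _
      _ ≤ (2 * b) * ((1 - a) ^ d * (2 * b)) := h1
      _ = (1 - a) ^ d * (4 * b ^ 2) := by ring
  obtain ⟨him, hib, _⟩ := iter_props κ hD ha1 hg hb d
  calc ∫ ω, W ω * (((Pop κ)^[d] g) (Xc j ω) - m) ∂Pr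
      ≤ ∫ _, (1 - a) ^ d * (4 * b ^ 2) ∂Pr := by
        refine integral_mono ?_ (integrable_const _) hptw
        exact integrable_of_bdd (((hg.comp (hXm j)).sub measurable_const).mul
          ((him.comp (hXm j)).sub measurable_const)) (c := 2 * b * ((1 - a) ^ d * (2 * b)))
          fun ω => by
            rw [abs_mul]
            exact mul_le_mul (hWb ω) (hdev (Xc j ω)) (abs_nonneg _)
              (le_trans (abs_nonneg _) (hWb ω))
    _ = (1 - a) ^ d * (4 * b ^ 2) := by simp [measure_univ]

lemma row_sum {r : ℝ} (h0 : 0 ≤ r) (h1 : r < 1) (j n : ℕ) :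
    ∑ k ∈ Finset.range n, r ^ (Nat.dist j k) ≤ 2 * (1 - r)⁻¹ := by
  have hsummable := summable_geometric_of_lt_one h0 h1
  have hgeom : ∀ m : ℕ, ∑ k ∈ Finset.range m, r ^ k ≤ (1 - r)⁻¹ := fun m =>
    le_of_le_of_eq (Summable.sum_le_tsum _ (fun i _ => pow_nonneg h0 i) hsummable)
      (tsum_geometric_of_lt_one h0 h1)
  have hsub : Finset.range n ⊆ Finset.range j ∪ Finset.Ico j n := by
    intro k hk
    simp only [Finset.mem_range] at hk
    simp only [Finset.mem_union, Finset.mem_range, Finset.mem_Ico]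
    omega
  have hdisj : Disjoint (Finset.range j) (Finset.Ico j n) := by
    simp only [Finset.disjoint_left, Finset.mem_range, Finset.mem_Ico]
    omega
  calc ∑ k ∈ Finset.range n, r ^ (Nat.dist j k)
      ≤ ∑ k ∈ Finset.range j ∪ Finset.Ico j n, r ^ (Nat.dist j k) :=
        Finset.sum_le_sum_of_subset_of_nonneg hsub fun k _ _ => pow_nonneg h0 _
    _ = ∑ k ∈ Finset.range j, r ^ (Nat.dist j k) + ∑ k ∈ Finset.Ico j n, r ^ (Nat.dist j k) :=
        Finset.sum_union hdisj
    _ ≤ (1 - r)⁻¹ + (1 - r)⁻¹ := by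
        refine add_le_add ?_ ?_
        · have hrefl : ∑ k ∈ Finset.range j, r ^ (Nat.dist j k)
              = ∑ k ∈ Finset.range j, r ^ (k + 1) := by
            rw [← Finset.sum_range_reflect (fun k => r ^ (Nat.dist j k)) j]
            refine Finset.sum_congr rfl fun k hk => ?_
            simp only [Finset.mem_range] at hk
            congr 1
            simp only [Nat.dist]
            omega
          rw [hrefl]
          refine le_trans (Finset.sum_le_sum fun k _ => ?_) (hgeom j)
          exact pow_le_pow_of_le_one h0 h1.le (Nat.le_succ k)
        · have : ∑ k ∈ Finset.Ico j n, r ^ (Nat.dist j k)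
              = ∑ k ∈ Finset.range (n - j), r ^ k := by
            rw [Finset.sum_Ico_eq_sum_range]
            refine Finset.sum_congr rfl fun k _ => ?_
            congr 1
            simp only [Nat.dist]
            omega
          rw [this]
          exact hgeom _
    _ = 2 * (1 - r)⁻¹ := by ring

end Cov

section Main

variable {X : Type*} [TopologicalSpace X] [PolishSpace X] [MeasurableSpace X] [BorelSpace X]
  {Ω : Type*} [mΩ : MeasurableSpace Ω]

lemma main_est (κ : Kernel X X) [IsMarkovKernel κ] {a : ℝ} (ha : a ∈ Set.Ioo (0:ℝ) 1)
    (hD : ∀ x y : X, tvDist (κ x) (κ y) ≤ 1 - a)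
    (μ : Measure X) [IsProbabilityMeasure μ] (hμ : μ.bind (fun x => κ x) = μ)
    (Pr : Measure Ω) [IsProbabilityMeasure Pr]
    (Xc : ℕ → Ω → X) (𝓕 : Filtration ℕ mΩ) (hadapt : StronglyAdapted 𝓕 Xc)
    (hmark : ∀ (n : ℕ) (A : Set X), MeasurableSet A →
      (Pr[fun ω => Set.indicator A (fun _ => (1 : ℝ)) (Xc (n + 1) ω) | 𝓕 n]
        =ᵐ[Pr] fun ω => ((κ (Xc n ω)) A).toReal))
    {g : X → ℝ} (hg : Measurable g) {b : ℝ} (hb : ∀ x, |g x| ≤ b)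
    (n : ℕ) (hn : 0 < n) :
    ∫ ω, ((1 / (n : ℝ)) * ∑ k ∈ Finset.range n, g (Xc k ω) - ∫ x, g x ∂μ) ^ 2 ∂Pr
      ≤ 8 * b ^ 2 / (a * n) := by
  obtain ⟨ha0, ha1⟩ := ha
  have hn' : (0:ℝ) < (n : ℝ) := by exact_mod_cast hn
  have hXm : ∀ k, Measurable (Xc k) := fun k => ((hadapt k).mono (𝓕.le k)).measurable
  have hXne : Nonempty X := by
    by_contra hne
    rw [not_nonempty_iff] at hne
    have h1 : (μ : Measure X) Set.univ = 1 := measure_univ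
    rw [Set.univ_eq_empty_iff.mpr hne, measure_empty] at h1
    exact zero_ne_one h1
  have hb0 : 0 ≤ b := (abs_nonneg _).trans (hb (Classical.arbitrary X))
  have hmb : |∫ x, g x ∂μ| ≤ b := by
    have := norm_integral_le_of_norm_le_const (μ := μ) (f := g) (C := b)
      (ae_of_all _ fun x => by simpa [Real.norm_eq_abs] using hb x)
    simpa [Real.norm_eq_abs, measure_univ] using this
  have hWm : ∀ k, Measurable (fun ω => g (Xc k ω) - ∫ x, g x ∂μ) := fun k =>
    (hg.comp (hXm k)).sub measurable_const
  have hWb : ∀ k ω, |g (Xc k ω) - ∫ x, g x ∂μ| ≤ 2 * b := fun k ω => by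
    calc |g (Xc k ω) - ∫ x, g x ∂μ| ≤ |g (Xc k ω)| + |∫ x, g x ∂μ| := abs_sub _ _
      _ ≤ 2 * b := by have := hb (Xc k ω); linarith
  have hintWW : ∀ j k, Integrable
      (fun ω => (g (Xc j ω) - ∫ x, g x ∂μ) * (g (Xc k ω) - ∫ x, g x ∂μ)) Pr := fun j k =>
    integrable_of_bdd ((hWm j).mul (hWm k)) (c := 2 * b * (2 * b)) fun ω => by
      rw [abs_mul]
      exact mul_le_mul (hWb j ω) (hWb k ω) (abs_nonneg _) (by linarith)
  -- pointwise rewriting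
  have hptw : ∀ ω, ((1 / (n : ℝ)) * ∑ k ∈ Finset.range n, g (Xc k ω) - ∫ x, g x ∂μ) ^ 2
      = (1 / (n : ℝ) ^ 2) * (∑ k ∈ Finset.range n, (g (Xc k ω) - ∫ x, g x ∂μ)) ^ 2 := by
    intro ω
    have hsum : ∑ k ∈ Finset.range n, (g (Xc k ω) - ∫ x, g x ∂μ)
        = (∑ k ∈ Finset.range n, g (Xc k ω)) - (n : ℝ) * ∫ x, g x ∂μ := by
      rw [Finset.sum_sub_distrib, Finset.sum_const, Finset.card_range, nsmul_eq_mul]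
    rw [hsum]
    have hne : (n : ℝ) ≠ 0 := ne_of_gt hn'
    field_simp
    try ring
  have hLHS : ∫ ω, ((1 / (n : ℝ)) * ∑ k ∈ Finset.range n, g (Xc k ω) - ∫ x, g x ∂μ) ^ 2 ∂Pr
      = (1 / (n : ℝ) ^ 2) * ∫ ω, (∑ k ∈ Finset.range n, (g (Xc k ω) - ∫ x, g x ∂μ)) ^ 2 ∂Pr := by
    rw [← integral_const_mul]
    exact integral_congr_ae (ae_of_all _ hptw)
  -- expand the square
  have hsq : ∫ ω, (∑ k ∈ Finset.range n, (g (Xc k ω) - ∫ x, g x ∂μ)) ^ 2 ∂Pr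
      = ∑ j ∈ Finset.range n, ∑ k ∈ Finset.range n,
          ∫ ω, (g (Xc j ω) - ∫ x, g x ∂μ) * (g (Xc k ω) - ∫ x, g x ∂μ) ∂Pr := by
    have hexp : ∀ ω, (∑ k ∈ Finset.range n, (g (Xc k ω) - ∫ x, g x ∂μ)) ^ 2
        = ∑ j ∈ Finset.range n, ∑ k ∈ Finset.range n,
            (g (Xc j ω) - ∫ x, g x ∂μ) * (g (Xc k ω) - ∫ x, g x ∂μ) := by
      intro ω
      rw [sq, Finset.sum_mul_sum]
    rw [integral_congr_ae (ae_of_all _ hexp),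
      integral_finset_sum _ (fun j _ => integrable_finset_sum _ fun k _ => hintWW j k)]
    exact Finset.sum_congr rfl fun j _ => integral_finset_sum _ fun k _ => hintWW j k
  -- pairwise bound
  have hpair : ∀ j k, ∫ ω, (g (Xc j ω) - ∫ x, g x ∂μ) * (g (Xc k ω) - ∫ x, g x ∂μ) ∂Pr
      ≤ (1 - a) ^ (Nat.dist j k) * (4 * b ^ 2) := by
    intro j k
    rcases le_total j k with hjk | hjk
    · have hcb := cov_bound κ ⟨ha0, ha1⟩ hD μ hμ Pr Xc 𝓕 hadapt hmark hg hb j (k - j)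
      have hk : j + (k - j) = k := by omega
      rw [hk] at hcb
      have hd : Nat.dist j k = k - j := by simp only [Nat.dist]; omega
      rw [hd]
      exact hcb
    · have hcb := cov_bound κ ⟨ha0, ha1⟩ hD μ hμ Pr Xc 𝓕 hadapt hmark hg hb k (j - k)
      have hk : k + (j - k) = j := by omega
      rw [hk] at hcb
      have hd : Nat.dist j k = j - k := by simp only [Nat.dist]; omega
      rw [hd]
      refine le_trans (le_of_eq ?_) hcb
      exact integral_congr_ae (ae_of_all _ fun ω => by ring)
  -- sum the bounds
  have hr0 : (0:ℝ) ≤ 1 - a := by linarith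
  have hr1 : 1 - a < 1 := by linarith
  have hrowsum : ∀ j, ∑ k ∈ Finset.range n, (1 - a) ^ (Nat.dist j k) * (4 * b ^ 2)
      ≤ 2 * a⁻¹ * (4 * b ^ 2) := by
    intro j
    rw [← Finset.sum_mul]
    refine mul_le_mul_of_nonneg_right ?_ (by positivity)
    have := row_sum hr0 hr1 j n
    simpa using this
  have hsumbound : ∑ j ∈ Finset.range n, ∑ k ∈ Finset.range n,
      ∫ ω, (g (Xc j ω) - ∫ x, g x ∂μ) * (g (Xc k ω) - ∫ x, g x ∂μ) ∂Pr
      ≤ (n : ℝ) * (2 * a⁻¹ * (4 * b ^ 2)) := by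
    calc ∑ j ∈ Finset.range n, ∑ k ∈ Finset.range n,
          ∫ ω, (g (Xc j ω) - ∫ x, g x ∂μ) * (g (Xc k ω) - ∫ x, g x ∂μ) ∂Pr
        ≤ ∑ j ∈ Finset.range n, (2 * a⁻¹ * (4 * b ^ 2)) := by
          refine Finset.sum_le_sum fun j _ => ?_
          exact le_trans (Finset.sum_le_sum fun k _ => hpair j k) (hrowsum j)
      _ = (n : ℝ) * (2 * a⁻¹ * (4 * b ^ 2)) := by
          rw [Finset.sum_const, Finset.card_range, nsmul_eq_mul]
  rw [hLHS]
  calc (1 / (n : ℝ) ^ 2) * ∫ ω, (∑ k ∈ Finset.range n, (g (Xc k ω) - ∫ x, g x ∂μ)) ^ 2 ∂Pr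
      ≤ (1 / (n : ℝ) ^ 2) * ((n : ℝ) * (2 * a⁻¹ * (4 * b ^ 2))) := by
        refine mul_le_mul_of_nonneg_left ?_ (by positivity)
        rw [hsq]
        exact hsumbound
    _ = 8 * b ^ 2 / (a * n) := by
        field_simp
        ring

end Main

theorem ergodic_average_L2_bound {X : Type*} [TopologicalSpace X] [PolishSpace X]
    [MeasurableSpace X] [BorelSpace X]
    (κ : Kernel X X) [IsMarkovKernel κ] (a : ℝ) (ha : a ∈ Set.Ioo (0:ℝ) 1)
    (hD : ∀ x y : X, tvDist (κ x) (κ y) ≤ 1 - a)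
    (μ : Measure X) [IsProbabilityMeasure μ] (hμ : stepK κ μ = μ)
    {Ω : Type*} [mΩ : MeasurableSpace Ω] (Pr : Measure Ω) [IsProbabilityMeasure Pr]
    (Xc : ℕ → Ω → X) (𝓕 : Filtration ℕ mΩ) (hadapt : StronglyAdapted 𝓕 Xc)
    (hmark : ∀ (n : ℕ) (A : Set X), MeasurableSet A →
      (Pr[fun ω => Set.indicator A (fun _ => (1 : ℝ)) (Xc (n + 1) ω) | 𝓕 n]
        =ᵐ[Pr] fun ω => ((κ (Xc n ω)) A).toReal))
    (f : X → ℝ) (hf : Measurable f) (C : ℝ) (hC : ∀ x, |f x| ≤ C)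
    (n : ℕ) (hn : 0 < n) :
    ∫ ω, ((1 / (n : ℝ)) * ∑ k ∈ Finset.range n, f (Xc k ω) - ∫ x, f x ∂μ) ^ 2 ∂Pr
      ≤ (4 * (fstar f) ^ 2 / (a ^ 2 * (n : ℝ))) * (2 + 8 / (n : ℝ)) := by
  obtain ⟨ha0, ha1⟩ := ha
  have hμ' : μ.bind (fun x => κ x) = μ := hμ
  have hn' : (0:ℝ) < (n : ℝ) := by exact_mod_cast hn
  have hXne : Nonempty X := by
    by_contra hne
    rw [not_nonempty_iff] at hne
    have h1 : (μ : Measure X) Set.univ = 1 := measure_univ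
    rw [Set.univ_eq_empty_iff.mpr hne, measure_empty] at h1
    exact zero_ne_one h1
  have hfst0 : 0 ≤ fstar f :=
    Real.iInf_nonneg fun l => Real.iSup_nonneg fun x => abs_nonneg _
  -- key estimate for every ε > 0
  have key : ∀ ε : ℝ, 0 < ε →
      ∫ ω, ((1 / (n : ℝ)) * ∑ k ∈ Finset.range n, f (Xc k ω) - ∫ x, f x ∂μ) ^ 2 ∂Pr
        ≤ (4 * (fstar f + ε) ^ 2 / (a ^ 2 * (n : ℝ))) * (2 + 8 / (n : ℝ)) := by
    intro ε hε
    obtain ⟨l, hl⟩ : ∃ l : ℝ, (⨆ x, |f x - l|) < fstar f + ε :=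
      exists_lt_of_ciInf_lt (by linarith : fstar f < fstar f + ε)
    have hbdd : BddAbove (Set.range fun x : X => |f x - l|) := by
      refine ⟨C + |l|, ?_⟩
      rintro _ ⟨x, rfl⟩
      calc |f x - l| ≤ |f x| + |l| := abs_sub _ _
        _ ≤ C + |l| := by have := hC x; linarith
    have hb : ∀ x, |f x - l| ≤ fstar f + ε := fun x =>
      le_trans (le_ciSup hbdd x) hl.le
    have hg : Measurable fun x => f x - l := hf.sub measurable_const
    -- apply main estimate
    have hest := main_est κ ⟨ha0, ha1⟩ hD μ hμ' Pr Xc 𝓕 hadapt hmark hg hb n hn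
    -- LHS identification
    have hfint : Integrable f μ := integrable_of_bdd hf hC
    have hmint : ∫ x, (f x - l) ∂μ = (∫ x, f x ∂μ) - l := by
      rw [integral_sub hfint (integrable_const l), integral_const]
      simp [measure_univ]
    have hLHSeq : ∀ ω, ((1 / (n : ℝ)) * ∑ k ∈ Finset.range n, f (Xc k ω) - ∫ x, f x ∂μ)
        = ((1 / (n : ℝ)) * ∑ k ∈ Finset.range n, (f (Xc k ω) - l) - ∫ x, (f x - l) ∂μ) := by
      intro ω
      rw [hmint, Finset.sum_sub_distrib, Finset.sum_const, Finset.card_range, nsmul_eq_mul]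
      have hne : (n : ℝ) ≠ 0 := ne_of_gt hn'
      field_simp
      ring
    have hLHSint : ∫ ω, ((1 / (n : ℝ)) * ∑ k ∈ Finset.range n, f (Xc k ω) - ∫ x, f x ∂μ) ^ 2 ∂Pr
        = ∫ ω, ((1 / (n : ℝ)) * ∑ k ∈ Finset.range n, (f (Xc k ω) - l)
            - ∫ x, (f x - l) ∂μ) ^ 2 ∂Pr :=
      integral_congr_ae (ae_of_all _ fun ω => by dsimp only; rw [hLHSeq ω])
    rw [hLHSint]
    refine le_trans hest ?_
    -- arithmetic: 8 b² / (a n) ≤ 4 b² / (a² n) * (2 + 8/n)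
    have hb0 : (0:ℝ) ≤ fstar f + ε := by linarith
    have h1 : 8 * (fstar f + ε) ^ 2 / (a * n) ≤ 8 * (fstar f + ε) ^ 2 / (a ^ 2 * n) := by
      refine div_le_div_of_nonneg_left (by positivity) (by positivity) ?_
      have : a ^ 2 ≤ a := by nlinarith
      exact mul_le_mul_of_nonneg_right this hn'.le
    have h2 : (4 * (fstar f + ε) ^ 2 / (a ^ 2 * (n : ℝ))) * (2 + 8 / (n : ℝ))
        = 8 * (fstar f + ε) ^ 2 / (a ^ 2 * n) + 32 * (fstar f + ε) ^ 2 / (a ^ 2 * n ^ 2) := by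
      have hne : (n : ℝ) ≠ 0 := ne_of_gt hn'
      have hane : a ≠ 0 := ne_of_gt ha0
      field_simp
      ring
    rw [h2]
    have h3 : (0:ℝ) ≤ 32 * (fstar f + ε) ^ 2 / (a ^ 2 * n ^ 2) := by positivity
    linarith
  -- pass to the limit ε → 0⁺
  have hcont : Tendsto (fun ε : ℝ => (4 * (fstar f + ε) ^ 2 / (a ^ 2 * (n : ℝ)))
      * (2 + 8 / (n : ℝ))) (nhdsWithin 0 (Set.Ioi 0))
      (nhds ((4 * (fstar f) ^ 2 / (a ^ 2 * (n : ℝ))) * (2 + 8 / (n : ℝ)))) := by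
    have hc : Continuous fun ε : ℝ => (4 * (fstar f + ε) ^ 2 / (a ^ 2 * (n : ℝ)))
        * (2 + 8 / (n : ℝ)) := by
      apply Continuous.mul _ continuous_const
      apply Continuous.div_const
      exact (continuous_const.mul ((continuous_const.add continuous_id).pow 2))
    have := hc.tendsto 0
    simpa using this.mono_left nhdsWithin_le_nhds
  refine ge_of_tendsto hcont ?_
  filter_upwards [self_mem_nhdsWithin] with ε hε
  exact key ε hε
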